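/- ∫_{[0,2π)^{L_r+L_s}} f²(Δ_X, Δ_Y + C) dy dv = (1/2)(2π)^{L_r+L_s}·K² if Δ_X ∈ {qπ : q∈ℤ}, and (1/2)(2π)^{L_r+L_s}·sin²(K·Δ_X)/sin²(Δ_X) otherwise, where Δ_Y is a sum/difference of distinct integration variables (so it contains at least one variable with coefficient ±1) and C is a constant. -/

import Mathlib

open MeasureTheory Real Finset

/-- f(x,y) = Σ_{k=0}^{K-1} cos(y - 2kx). -/
noncomputable def fK (K : ℕ) (x y : ℝ) : ℝ :=
  ∑ k ∈ Finset.range K, Real.cos (y - 2 * (k : ℝ) * x)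

/-- the hypercube [0, 2π)^L. -/
def cube (L : ℕ) : Set (Fin L → ℝ) := Set.univ.pi fun _ => Set.Ico 0 (2 * Real.pi)

/-- 𝒳* = {qπ/K : q ∈ ℤ} \ {nπ : n ∈ ℤ}. -/
def Xstar (K : ℕ) : Set ℝ :=
  {r | (∃ q : ℤ, r = (q : ℝ) * Real.pi / K) ∧ ∀ n : ℤ, r ≠ (n : ℝ) * Real.pi}

/-- the representative of a modulo π lying in [0, π). -/
noncomputable def modpi (a : ℝ) : ℝ := a - Real.pi * ⌊a / Real.pi⌋

/- ### Auxiliary lemmas -/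

lemma measurableSet_cube (L : ℕ) : MeasurableSet (cube L) :=
  MeasurableSet.univ_pi fun _ => measurableSet_Ico

lemma volume_cube (L : ℕ) : volume (cube L) = ENNReal.ofReal (2 * Real.pi) ^ L := by
  rw [cube, volume_pi_pi]; simp [Real.volume_Ico]

lemma volume_cube_toReal (L : ℕ) : (volume (cube L)).toReal = (2 * Real.pi) ^ L := by
  rw [volume_cube, ENNReal.toReal_pow, ENNReal.toReal_ofReal (by positivity)]

lemma integral_const_cube (L : ℕ) (c : ℝ) : ∫ _y in cube L, c = (2 * Real.pi) ^ L * c := by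
  rw [setIntegral_const, measureReal_def, volume_cube_toReal, smul_eq_mul]

lemma integrableOn_cube {L : ℕ} {E : Type*} [NormedAddCommGroup E] {f : (Fin L → ℝ) → E}
    (hf : AEStronglyMeasurable f (volume.restrict (cube L))) (M : ℝ) (hM : ∀ x, ‖f x‖ ≤ M) :
    IntegrableOn f (cube L) := by
  haveI : IsFiniteMeasure (volume.restrict (cube L)) :=
    ⟨by rw [Measure.restrict_apply_univ, volume_cube]
        exact ENNReal.pow_lt_top ENNReal.ofReal_lt_top⟩
  exact Integrable.mono' (integrable_const M) hf (ae_of_all _ hM)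

lemma integral_cube_prod {L : ℕ} (g : Fin L → ℝ → ℂ) :
    ∫ y in cube L, ∏ t, g t (y t) = ∏ t, ∫ u in Set.Ico (0:ℝ) (2 * Real.pi), g t u := by
  have hind : ∀ y : Fin L → ℝ, (cube L).indicator (fun y => ∏ t, g t (y t)) y
      = ∏ t, (Set.Ico (0:ℝ) (2 * Real.pi)).indicator (g t) (y t) := by
    intro y
    by_cases hy : y ∈ cube L
    · rw [Set.indicator_of_mem hy]
      refine Finset.prod_congr rfl fun t _ => ?_
      rw [Set.indicator_of_mem (hy t (Set.mem_univ t))]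
    · rw [Set.indicator_of_notMem hy]
      obtain ⟨t, ht⟩ : ∃ t, y t ∉ Set.Ico (0:ℝ) (2 * Real.pi) := by
        simpa [cube, Set.mem_pi] using hy
      exact (Finset.prod_eq_zero (Finset.mem_univ t)
        (by rw [Set.indicator_of_notMem ht])).symm
  rw [← integral_indicator (measurableSet_cube L)]
  simp_rw [hind]
  rw [volume_pi, MeasureTheory.integral_fintype_prod_eq_prod
    (f := fun t u => (Set.Ico (0:ℝ) (2 * Real.pi)).indicator (g t) u)]
  refine Finset.prod_congr rfl fun t _ => ?_
  rw [integral_indicator measurableSet_Ico]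

lemma exp_int_integral (n : ℤ) (hn : n ≠ 0) :
    ∫ u in Set.Ico (0:ℝ) (2 * Real.pi), Complex.exp ((n:ℝ) * u * Complex.I) = 0 := by
  have h2π : (0:ℝ) ≤ 2 * Real.pi := by positivity
  have hrw : (fun u : ℝ => Complex.exp ((n:ℝ) * (u:ℂ) * Complex.I))
      = fun u : ℝ => Complex.exp (((n:ℂ) * Complex.I) * u) := by
    funext u; rw [Complex.exp_eq_exp_iff_exists_int]; exact ⟨0, by push_cast; ring⟩
  have hc : ((n:ℂ) * Complex.I) ≠ 0 := by simp [Complex.I_ne_zero, hn]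
  calc ∫ u in Set.Ico (0:ℝ) (2 * Real.pi), Complex.exp ((n:ℝ) * u * Complex.I)
      = ∫ u in Set.Ioo (0:ℝ) (2 * Real.pi), Complex.exp ((n:ℝ) * u * Complex.I) :=
        integral_Ico_eq_integral_Ioo
    _ = ∫ u in Set.Ioc (0:ℝ) (2 * Real.pi), Complex.exp ((n:ℝ) * u * Complex.I) :=
        integral_Ioc_eq_integral_Ioo.symm
    _ = ∫ u in (0:ℝ)..(2 * Real.pi), Complex.exp ((n:ℝ) * u * Complex.I) :=
        (intervalIntegral.integral_of_le h2π).symm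
    _ = 0 := by
        simp only [hrw]
        rw [integral_exp_mul_complex hc]
        have : Complex.exp ((n:ℂ) * Complex.I * (2 * Real.pi)) = 1 := by
          rw [show ((n:ℂ) * Complex.I * (2 * Real.pi))
            = (n:ℤ) * (2 * Real.pi * Complex.I) by push_cast; ring]
          exact Complex.exp_int_mul_two_pi_mul_I n
        simp [this]

lemma osc_cube {L : ℕ} (i l : Fin L) (hil : i ≠ l) (n : ℤ) (hn : n ≠ 0) (ψ : ℝ) :
    ∫ y in cube L, Real.cos ((n:ℝ) * (y i - y l) + ψ) = 0 := by
  set c : Fin L → ℝ := fun t => if t = i then (n:ℝ) else if t = l then -(n:ℝ) else 0 with hc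
  have hsum : ∀ y : Fin L → ℝ, (∑ t, c t * y t) = (n:ℝ) * (y i - y l) := by
    intro y
    have : ∀ t, c t * y t = (if t = i then (n:ℝ) * y t else 0) +
        (if t = l then -(n:ℝ) * y t else 0) := by
      intro t
      by_cases h1 : t = i
      · subst h1; simp [hc, hil]
      · by_cases h2 : t = l <;> simp [hc, h1, h2, hil.symm]
    simp_rw [this]
    rw [Finset.sum_add_distrib]
    simp only [Finset.sum_ite_eq', Finset.mem_univ, if_true]
    ring
  set g : Fin L → ℝ → ℂ := fun t u => Complex.exp ((c t : ℝ) * u * Complex.I) with hg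
  have hZ : ∫ y in cube L, (∏ t, g t (y t)) = 0 := by
    rw [integral_cube_prod g]
    refine Finset.prod_eq_zero (Finset.mem_univ i) ?_
    have hci : c i = (n:ℝ) := by simp [hc]
    simp only [hg, hci]
    exact exp_int_integral n hn
  set F : (Fin L → ℝ) → ℂ := fun y => Complex.exp (((n:ℝ) * (y i - y l) + ψ : ℝ) * Complex.I)
    with hF
  have hFre : ∀ y, Real.cos ((n:ℝ) * (y i - y l) + ψ) = (F y).re := fun y =>
    (Complex.exp_ofReal_mul_I_re _).symm
  have hFmeas : Measurable F := by
    apply Complex.measurable_exp.comp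
    apply Measurable.mul_const
    apply Complex.measurable_ofReal.comp
    fun_prop
  have hFint : IntegrableOn F (cube L) := by
    refine integrableOn_cube (hFmeas.aestronglyMeasurable) 1 fun y => ?_
    show ‖Complex.exp (((n:ℝ) * (y i - y l) + ψ : ℝ) * Complex.I)‖ ≤ 1
    rw [Complex.norm_exp_ofReal_mul_I]
  have hprod : ∀ y : Fin L → ℝ, F y = Complex.exp ((ψ:ℝ) * Complex.I) * ∏ t, g t (y t) := by
    intro y
    simp only [hg, hF]
    rw [← Complex.exp_sum, ← Complex.exp_add]
    congr 1
    have : (∑ t, ((c t : ℝ) : ℂ) * (y t : ℂ) * Complex.I)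
        = ((∑ t, c t * y t : ℝ) : ℂ) * Complex.I := by
      push_cast; rw [Finset.sum_mul]
    rw [this, hsum y]
    push_cast; ring
  have hFzero : ∫ y in cube L, F y = 0 := by
    calc ∫ y in cube L, F y
        = ∫ y in cube L, Complex.exp ((ψ:ℝ) * Complex.I) * ∏ t, g t (y t) :=
          integral_congr_ae (ae_of_all _ hprod)
      _ = Complex.exp ((ψ:ℝ) * Complex.I) * ∫ y in cube L, ∏ t, g t (y t) :=
          integral_const_mul _ _
      _ = 0 := by rw [hZ, mul_zero]
  calc ∫ y in cube L, Real.cos ((n:ℝ) * (y i - y l) + ψ)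
      = ∫ y in cube L, (F y).re := by simp_rw [hFre]
    _ = (∫ y in cube L, F y).re := by
        rw [← RCLike.re_to_complex, ← integral_re hFint]
        simp [RCLike.re_to_complex]
    _ = 0 := by rw [hFzero, Complex.zero_re]

lemma osc_cube_sin {L : ℕ} (i l : Fin L) (hil : i ≠ l) (n : ℤ) (hn : n ≠ 0) (ψ : ℝ) :
    ∫ y in cube L, Real.sin ((n:ℝ) * (y i - y l) + ψ) = 0 := by
  have h : ∀ y : Fin L → ℝ, Real.sin ((n:ℝ) * (y i - y l) + ψ)
      = Real.cos ((((-n):ℤ):ℝ) * (y i - y l) + (Real.pi / 2 - ψ)) := by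
    intro y
    rw [← Real.cos_pi_div_two_sub]
    congr 1
    push_cast; ring
  simp_rw [h]
  exact osc_cube i l hil (-n) (neg_ne_zero.mpr hn) _

lemma sq_expand (cc ss θ : ℝ) :
    (cc * Real.cos θ + ss * Real.sin θ)^2
      = (cc^2 + ss^2)/2 + ((cc^2 - ss^2)/2) * Real.cos (2*θ) + (cc*ss) * Real.sin (2*θ) := by
  rw [Real.cos_two_mul, Real.sin_two_mul]
  nlinarith [Real.sin_sq_add_cos_sq θ]

lemma single_cube {L : ℕ} (i l : Fin L) (hil : i ≠ l) (a : ℝ) (ha : a = 1 ∨ a = -1)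
    (cc ss ψ : ℝ) :
    ∫ y in cube L, (cc * Real.cos (a*(y i - y l) + ψ) + ss * Real.sin (a*(y i - y l) + ψ))^2
      = (2 * Real.pi)^L * ((cc^2 + ss^2)/2) := by
  have hmeas : ∀ (r : ℝ) (g : ℝ → ℝ), Continuous g → (∀ t, |g t| ≤ 1) →
      IntegrableOn (fun y : Fin L → ℝ => r * g (a*(y i - y l) + ψ)) (cube L) := by
    intro r g hg hgb
    refine integrableOn_cube (Continuous.aestronglyMeasurable (by fun_prop)) |r| fun y => ?_
    rw [Real.norm_eq_abs, abs_mul]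
    exact mul_le_of_le_one_right (abs_nonneg r) (hgb _)
  have hconst : IntegrableOn (fun _ : Fin L → ℝ => (cc^2+ss^2)/2) (cube L) :=
    integrableOn_cube aestronglyMeasurable_const ‖(cc^2+ss^2)/2‖ (fun y => le_refl _)
  have hcosInt : IntegrableOn
      (fun y : Fin L → ℝ => ((cc^2-ss^2)/2) * Real.cos (2*(a*(y i - y l) + ψ))) (cube L) :=
    hmeas ((cc^2-ss^2)/2) (fun t => Real.cos (2*t)) (by fun_prop)
      (fun t => Real.abs_cos_le_one _)
  have hsinInt : IntegrableOn
      (fun y : Fin L → ℝ => (cc*ss) * Real.sin (2*(a*(y i - y l) + ψ))) (cube L) :=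
    hmeas (cc*ss) (fun t => Real.sin (2*t)) (by fun_prop)
      (fun t => Real.abs_sin_le_one _)
  have hcos : ∫ y in cube L, ((cc^2-ss^2)/2) * Real.cos (2*(a*(y i - y l) + ψ)) = 0 := by
    rw [MeasureTheory.integral_const_mul]
    rcases ha with rfl | rfl
    · have h : ∀ y : Fin L → ℝ, 2*((1:ℝ)*(y i - y l) + ψ) = ((2:ℤ):ℝ)*(y i - y l) + 2*ψ := by
        intro y; push_cast; ring
      simp_rw [h]
      rw [osc_cube i l hil 2 (by norm_num) _, mul_zero]
    · have h : ∀ y : Fin L → ℝ, 2*((-1:ℝ)*(y i - y l) + ψ) = (((-2):ℤ):ℝ)*(y i - y l) + 2*ψ := by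
        intro y; push_cast; ring
      simp_rw [h]
      rw [osc_cube i l hil (-2) (by norm_num) _, mul_zero]
  have hsin : ∫ y in cube L, (cc*ss) * Real.sin (2*(a*(y i - y l) + ψ)) = 0 := by
    rw [MeasureTheory.integral_const_mul]
    rcases ha with rfl | rfl
    · have h : ∀ y : Fin L → ℝ, 2*((1:ℝ)*(y i - y l) + ψ) = ((2:ℤ):ℝ)*(y i - y l) + 2*ψ := by
        intro y; push_cast; ring
      simp_rw [h]
      rw [osc_cube_sin i l hil 2 (by norm_num) _, mul_zero]
    · have h : ∀ y : Fin L → ℝ, 2*((-1:ℝ)*(y i - y l) + ψ) = (((-2):ℤ):ℝ)*(y i - y l) + 2*ψ := by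
        intro y; push_cast; ring
      simp_rw [h]
      rw [osc_cube_sin i l hil (-2) (by norm_num) _, mul_zero]
  simp_rw [sq_expand]
  have h1 := integral_add (μ := volume.restrict (cube L)) (hconst.add hcosInt) hsinInt
  have h2 := integral_add (μ := volume.restrict (cube L)) hconst hcosInt
  simp only [Pi.add_apply] at h1 h2
  rw [h1, h2, integral_const_cube, hcos, hsin]
  ring

lemma fK_eq (K : ℕ) (x θ : ℝ) :
    fK K x θ = (∑ k ∈ Finset.range K, Real.cos (2 * (k:ℝ) * x)) * Real.cos θ
      + (∑ k ∈ Finset.range K, Real.sin (2 * (k:ℝ) * x)) * Real.sin θ := by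
  rw [fK, Finset.sum_mul, Finset.sum_mul, ← Finset.sum_add_distrib]
  refine Finset.sum_congr rfl fun k _ => ?_
  rw [Real.cos_sub]; ring

lemma cs_pi (K : ℕ) (x : ℝ) (hx : ∃ q : ℤ, x = (q:ℝ) * Real.pi) :
    (∑ k ∈ Finset.range K, Real.cos (2 * (k:ℝ) * x)) = K
      ∧ (∑ k ∈ Finset.range K, Real.sin (2 * (k:ℝ) * x)) = 0 := by
  obtain ⟨q, rfl⟩ := hx
  constructor
  · have h : ∀ k ∈ Finset.range K, Real.cos (2*(k:ℝ)*((q:ℝ)*Real.pi)) = 1 := fun k _ => by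
      rw [show 2*(k:ℝ)*((q:ℝ)*Real.pi) = ((k*q : ℤ):ℝ)*(2*Real.pi) by push_cast; ring]
      exact Real.cos_int_mul_two_pi _
    rw [Finset.sum_congr rfl h, Finset.sum_const, Finset.card_range, nsmul_eq_mul, mul_one]
  · have h : ∀ k ∈ Finset.range K, Real.sin (2*(k:ℝ)*((q:ℝ)*Real.pi)) = 0 := fun k _ => by
      rw [show 2*(k:ℝ)*((q:ℝ)*Real.pi) = ((2*k*q : ℤ):ℝ)*Real.pi by push_cast; ring]
      exact Real.sin_int_mul_pi _
    rw [Finset.sum_congr rfl h, Finset.sum_const, smul_zero]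

lemma cs_notpi (K : ℕ) (x : ℝ) (hx : Real.sin x ≠ 0) :
    (∑ k ∈ Finset.range K, Real.cos (2 * (k:ℝ) * x))^2
      + (∑ k ∈ Finset.range K, Real.sin (2 * (k:ℝ) * x))^2
      = Real.sin ((K:ℝ) * x)^2 / Real.sin x ^2 := by
  set z : ℂ := Complex.exp ((2*x : ℝ) * Complex.I) with hz
  have hzk : ∀ k : ℕ, z ^ k = Complex.exp ((2*(k:ℝ)*x : ℝ) * Complex.I) := by
    intro k
    rw [hz, ← Complex.exp_nat_mul]
    congr 1; push_cast; ring
  set S : ℂ := ∑ k ∈ Finset.range K, z ^ k with hS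
  have hSre : S.re = ∑ k ∈ Finset.range K, Real.cos (2 * (k:ℝ) * x) := by
    rw [hS, Complex.re_sum]
    exact Finset.sum_congr rfl fun k _ => by rw [hzk k, Complex.exp_ofReal_mul_I_re]
  have hSim : S.im = ∑ k ∈ Finset.range K, Real.sin (2 * (k:ℝ) * x) := by
    rw [hS, Complex.im_sum]
    exact Finset.sum_congr rfl fun k _ => by rw [hzk k, Complex.exp_ofReal_mul_I_im]
  have hz1 : z ≠ 1 := by
    intro h
    rw [hz, Complex.exp_eq_one_iff] at h
    obtain ⟨n, hn⟩ := h
    have : (2*x : ℝ) = n * (2 * Real.pi) := by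
      have him := congrArg Complex.im hn
      simpa using him
    have hxn : x = n * Real.pi := by linarith
    rw [hxn] at hx
    exact hx (Real.sin_int_mul_pi n)
  have hgeom : S = (z ^ K - 1) / (z - 1) := geom_sum_eq hz1 K
  have hnormsq : ∀ θ : ℝ, Complex.normSq (Complex.exp ((θ:ℝ) * Complex.I) - 1)
      = 2 - 2 * Real.cos θ := by
    intro θ
    rw [Complex.normSq_apply]
    simp [Complex.exp_ofReal_mul_I_re, Complex.exp_ofReal_mul_I_im]
    nlinarith [Real.sin_sq_add_cos_sq θ]
  have h4 : ∀ t : ℝ, 2 - 2 * Real.cos (2*t) = 4 * Real.sin t ^ 2 := by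
    intro t
    rw [Real.cos_two_mul]
    nlinarith [Real.sin_sq_add_cos_sq t]
  have key : Complex.normSq S = Real.sin ((K:ℝ)*x)^2 / Real.sin x^2 := by
    rw [hgeom, Complex.normSq_div]
    have e1 : z ^ K - 1 = Complex.exp ((2*(K:ℝ)*x : ℝ) * Complex.I) - 1 := by rw [hzk K]
    have e2 : Complex.normSq (z ^ K - 1) = 4 * Real.sin ((K:ℝ)*x)^2 := by
      rw [e1, hnormsq]
      rw [show 2*(K:ℝ)*x = 2*((K:ℝ)*x) by ring, h4]
    have e3 : Complex.normSq (z - 1) = 4 * Real.sin x^2 := by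
      rw [hz, hnormsq, show (2*x:ℝ) = 2*x by ring, h4]
    rw [e2, e3]
    have : Real.sin x ^ 2 ≠ 0 := pow_ne_zero 2 hx
    field_simp
  rw [← hSre, ← hSim,
    show S.re ^ 2 + S.im ^ 2 = Complex.normSq S by rw [Complex.normSq_apply]; ring, key]

theorem stmt12 (K Lr Ls : ℕ) (hK : 1 ≤ K)
    (l i : Fin Lr) (m j : Fin Ls) (a b : ℝ)
    (ha : a = 0 ∨ a = 1 ∨ a = -1) (hb : b = 0 ∨ b = 1 ∨ b = -1)
    (hab : ¬(a = 0 ∧ b = 0)) (hal : a ≠ 0 → l ≠ i) (hbm : b ≠ 0 → m ≠ j)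
    (ΔX C : ℝ) :
    ((∃ q : ℤ, ΔX = (q : ℝ) * Real.pi) →
      (∫ y in cube Lr, ∫ v in cube Ls,
        (fK K ΔX (a * (y i - y l) + b * (v j - v m) + C)) ^ 2) =
      (1 / 2) * (2 * Real.pi) ^ (Lr + Ls) * (K : ℝ) ^ 2) ∧
    ((¬ ∃ q : ℤ, ΔX = (q : ℝ) * Real.pi) →
      (∫ y in cube Lr, ∫ v in cube Ls,
        (fK K ΔX (a * (y i - y l) + b * (v j - v m) + C)) ^ 2) =
      (1 / 2) * (2 * Real.pi) ^ (Lr + Ls) *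
        (Real.sin ((K : ℝ) * ΔX)) ^ 2 / (Real.sin ΔX) ^ 2) := by
  set cc : ℝ := ∑ k ∈ Finset.range K, Real.cos (2 * (k:ℝ) * ΔX) with hcc
  set ss : ℝ := ∑ k ∈ Finset.range K, Real.sin (2 * (k:ℝ) * ΔX) with hss
  have hfK : ∀ θ : ℝ, fK K ΔX θ = cc * Real.cos θ + ss * Real.sin θ := fun θ => fK_eq K ΔX θ
  have main : (∫ y in cube Lr, ∫ v in cube Ls,
      (fK K ΔX (a * (y i - y l) + b * (v j - v m) + C)) ^ 2)
      = (2 * Real.pi) ^ (Lr + Ls) * ((cc^2 + ss^2)/2) := by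
    rcases hb with rfl | hb'
    · rcases ha with rfl | ha'
      · exact absurd ⟨rfl, rfl⟩ hab
      · have hli : i ≠ l :=
          (hal (by rcases ha' with rfl | rfl <;> norm_num)).symm
        have hinner : ∀ y : Fin Lr → ℝ,
            (∫ v in cube Ls, (fK K ΔX (a * (y i - y l) + 0 * (v j - v m) + C)) ^ 2)
            = (2 * Real.pi) ^ Ls * (fK K ΔX (a * (y i - y l) + C)) ^ 2 := by
          intro y
          simp_rw [zero_mul, add_zero]
          exact integral_const_cube Ls _
        simp_rw [hinner]
        rw [MeasureTheory.integral_const_mul]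
        simp_rw [hfK]
        rw [single_cube i l hli a ha' cc ss C]
        rw [pow_add]; ring
    · have hjm : j ≠ m :=
        (hbm (by rcases hb' with rfl | rfl <;> norm_num)).symm
      have hinner : ∀ y : Fin Lr → ℝ,
          (∫ v in cube Ls, (fK K ΔX (a * (y i - y l) + b * (v j - v m) + C)) ^ 2)
          = (2 * Real.pi) ^ Ls * ((cc^2 + ss^2)/2) := by
        intro y
        have harg : ∀ v : Fin Ls → ℝ, a * (y i - y l) + b * (v j - v m) + C
            = b * (v j - v m) + (a * (y i - y l) + C) := fun v => by ring
        simp_rw [hfK, harg]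
        exact single_cube j m hjm b hb' cc ss _
      simp_rw [hinner]
      rw [integral_const_cube]
      rw [pow_add]; ring
  constructor
  · intro hq
    obtain ⟨h1, h2⟩ := cs_pi K ΔX hq
    rw [main, ← hcc, ← hss] at *
    rw [h1, h2]
    ring
  · intro hq
    have hsin : Real.sin ΔX ≠ 0 := by
      intro h
      rw [Real.sin_eq_zero_iff] at h
      obtain ⟨n, hn⟩ := h
      exact hq ⟨n, hn.symm⟩
    have hcs := cs_notpi K ΔX hsin
    rw [← hcc, ← hss] at hcs
    rw [main, hcs, eq_div_iff (pow_ne_zero 2 hsin)]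
    field_simp
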